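/- A cyclic surface in Sol₃ foliated by geodesics of the planes x = const of the form X(s,t) = (s, a(s), t), where a : I → ℝ is twice continuously differentiable on a nonempty open interval I and t ranges over ℝ, has zero Gaussian curvature if and only if a is constant on I (so the surface is a totally geodesic plane y = const). Equivalently, the Gaussian curvature vanishes identically if and only if a'(s) = 0 on I. -/

import Mathlib

open Real

noncomputable section

/-- Tangent/ambient vectors of Sol₃ modeled on ℝ³. -/
abbrev V3 : Type := ℝ × ℝ × ℝ

/-- The Sol₃ metric at a point `p = (x,y,z)`:
`g_p(u,v) = e^{2z}u₁v₁ + e^{-2z}u₂v₂ + u₃v₃`. -/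
def gSol (p u v : V3) : ℝ :=
  exp (2 * p.2.2) * u.1 * v.1 + exp (-(2 * p.2.2)) * u.2.1 * v.2.1 + u.2.2 * v.2.2

/-- The Christoffel bilinear map of the Sol₃ metric at a point `p`. -/
def GammaSol (p u v : V3) : V3 :=
  (u.1 * v.2.2 + u.2.2 * v.1,
   -(u.2.1 * v.2.2 + u.2.2 * v.2.1),
   -exp (2 * p.2.2) * u.1 * v.1 + exp (-(2 * p.2.2)) * u.2.1 * v.2.1)

/-- Partial derivative of a parametrized surface with respect to the first parameter. -/
def pXs (X : ℝ → ℝ → V3) (s t : ℝ) : V3 := deriv (fun s' => X s' t) s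

/-- Partial derivative of a parametrized surface with respect to the second parameter. -/
def pXt (X : ℝ → ℝ → V3) (s t : ℝ) : V3 := deriv (fun t' => X s t') t

/-- Ambient second-order quantity `S_ss = X_ss + Γ_X(X_s, X_s)`. -/
def Sss (X : ℝ → ℝ → V3) (s t : ℝ) : V3 :=
  deriv (fun s' => pXs X s' t) s + GammaSol (X s t) (pXs X s t) (pXs X s t)

/-- Ambient second-order quantity `S_st = X_st + Γ_X(X_s, X_t)`. -/
def Sst (X : ℝ → ℝ → V3) (s t : ℝ) : V3 :=
  deriv (fun t' => pXs X s t') t + GammaSol (X s t) (pXs X s t) (pXt X s t)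

/-- Ambient second-order quantity `S_tt = X_tt + Γ_X(X_t, X_t)`. -/
def Stt (X : ℝ → ℝ → V3) (s t : ℝ) : V3 :=
  deriv (fun t' => pXt X s t') t + GammaSol (X s t) (pXt X s t) (pXt X s t)

/-- `X : I × J → Sol₃` has zero mean curvature:
for every point of `I × J` and every normal vector `n`,
`E·g(S_tt,n) - 2F·g(S_st,n) + G·g(S_ss,n) = 0`. -/
def MeanZero (I J : Set ℝ) (X : ℝ → ℝ → V3) : Prop :=
  ∀ s ∈ I, ∀ t ∈ J, ∀ n : V3,
    gSol (X s t) n (pXs X s t) = 0 → gSol (X s t) n (pXt X s t) = 0 →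
    gSol (X s t) (pXs X s t) (pXs X s t) * gSol (X s t) (Stt X s t) n
      - 2 * gSol (X s t) (pXs X s t) (pXt X s t) * gSol (X s t) (Sst X s t) n
      + gSol (X s t) (pXt X s t) (pXt X s t) * gSol (X s t) (Sss X s t) n = 0

/-- `X : I × J → Sol₃` has zero Gaussian curvature:
for every point of `I × J` and every normal vector `n`,
`g(S_ss,n)·g(S_tt,n) - g(S_st,n)² = 0`. -/
def GaussZero (I J : Set ℝ) (X : ℝ → ℝ → V3) : Prop :=
  ∀ s ∈ I, ∀ t ∈ J, ∀ n : V3,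
    gSol (X s t) n (pXs X s t) = 0 → gSol (X s t) n (pXt X s t) = 0 →
    gSol (X s t) (Sss X s t) n * gSol (X s t) (Stt X s t) n
      - (gSol (X s t) (Sst X s t) n) ^ 2 = 0

section Aux

variable {I : Set ℝ} {a : ℝ → ℝ}

lemma pXs_eq (hIo : IsOpen I) (ha : ContDiffOn ℝ 2 a I) {s : ℝ} (hs : s ∈ I) (t : ℝ) :
    pXs (fun s t => (s, a s, t)) s t = (1, deriv a s, 0) := by
  have hda : DifferentiableAt ℝ a s :=
    (ha.contDiffAt (hIo.mem_nhds hs)).differentiableAt two_ne_zero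
  have h : HasDerivAt (fun s' : ℝ => ((s', a s', t) : V3)) (1, deriv a s, 0) s :=
    HasDerivAt.prodMk (hasDerivAt_id s) (HasDerivAt.prodMk hda.hasDerivAt (hasDerivAt_const s t))
  simpa [pXs] using h.deriv

lemma pXt_eq (a : ℝ → ℝ) (s t : ℝ) :
    pXt (fun s t => (s, a s, t)) s t = (0, 0, 1) := by
  have h : HasDerivAt (fun t' : ℝ => ((s, a s, t') : V3)) (0, 0, 1) t :=
    HasDerivAt.prodMk (hasDerivAt_const t s) (HasDerivAt.prodMk (hasDerivAt_const t (a s)) (hasDerivAt_id t))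
  simpa [pXt] using h.deriv

lemma Stt_eq (a : ℝ → ℝ) (s t : ℝ) :
    Stt (fun s t => (s, a s, t)) s t = (0, 0, 0) := by
  have h1 : (fun t' => pXt (fun s t => (s, a s, t)) s t') = fun _ => ((0, 0, 1) : V3) :=
    funext fun t' => pXt_eq a s t'
  simp [Stt, h1, pXt_eq, GammaSol, Prod.ext_iff]

lemma Sst_eq (hIo : IsOpen I) (ha : ContDiffOn ℝ 2 a I) {s : ℝ} (hs : s ∈ I) (t : ℝ) :
    Sst (fun s t => (s, a s, t)) s t = (1, -deriv a s, 0) := by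
  have h1 : (fun t' => pXs (fun s t => (s, a s, t)) s t') =
      fun _ => ((1, deriv a s, 0) : V3) :=
    funext fun t' => pXs_eq hIo ha hs t'
  simp [Sst, h1, pXs_eq hIo ha hs, pXt_eq, GammaSol, Prod.ext_iff]

end Aux

/-- The cyclic surface `X(s,t) = (s, a(s), t)` foliated by geodesics
has zero Gaussian curvature iff `a` is constant, equivalently iff `a' = 0` on `I`. -/
theorem flat_foliated_by_geodesics
    (I : Set ℝ) (hIo : IsOpen I) (hIne : I.Nonempty) (hIc : I.OrdConnected)
    (a : ℝ → ℝ) (ha : ContDiffOn ℝ 2 a I) :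
    (GaussZero I Set.univ (fun s t => (s, a s, t)) ↔
      ∃ c : ℝ, ∀ s ∈ I, a s = c) ∧
    (GaussZero I Set.univ (fun s t => (s, a s, t)) ↔
      ∀ s ∈ I, deriv a s = 0) := by
  have hd2 : GaussZero I Set.univ (fun s t => (s, a s, t)) ↔ ∀ s ∈ I, deriv a s = 0 := by
    constructor
    · intro hG s hs
      have h := hG s hs 0 (Set.mem_univ 0) (-deriv a s, 1, 0)
        (by rw [pXs_eq hIo ha hs]; simp [gSol])
        (by rw [pXt_eq]; simp [gSol])
      rw [Sst_eq hIo ha hs, Stt_eq] at h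
      simp only [gSol] at h
      norm_num at h
      nlinarith [h, sq_nonneg (deriv a s)]
    · intro hz s hs t _ n hn1 hn2
      rw [Sst_eq hIo ha hs, Stt_eq]
      rw [pXs_eq hIo ha hs] at hn1
      simp only [gSol, hz s hs] at hn1 ⊢
      nlinarith [hn1]
  refine ⟨hd2.trans ?_, hd2⟩
  constructor
  · intro hz
    obtain ⟨s₀, hs₀⟩ := hIne
    refine ⟨a s₀, fun s hs => ?_⟩
    have hC := (convex_iff_ordConnected.2 hIc).norm_image_sub_le_of_norm_deriv_le
      (f := a) (C := 0)
      (fun x hx => (ha.contDiffAt (hIo.mem_nhds hx)).differentiableAt two_ne_zero)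
      (fun x hx => by simp [hz x hx]) hs₀ hs
    have : ‖a s - a s₀‖ ≤ 0 := by simpa using hC
    have := norm_le_zero_iff.mp this
    linarith [sub_eq_zero.mp this]
  · rintro ⟨c, hc⟩ s hs
    have hev : a =ᶠ[nhds s] fun _ => c :=
      Filter.eventuallyEq_of_mem (hIo.mem_nhds hs) (fun x hx => hc x hx)
    rw [hev.deriv_eq]
    simp
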